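/- There is no finite constant C such that ∫_{ℝ³} f(x1,x2) f(x2,x3) dx ≤ C · ‖f‖_{L^{4/3}(ℝ²)}² holds for all measurable f : ℝ² → [0,∞]. -/

import Mathlib

open MeasureTheory Set
open scoped ENNReal

noncomputable def aFun : ℝ → ℝ≥0∞ :=
  (Ici (0:ℝ)).indicator (fun x => ENNReal.ofReal (max 1 x)⁻¹)

noncomputable def iFun : ℝ → ℝ≥0∞ := (Icc (0:ℝ) 1).indicator 1

lemma aFun_measurable : Measurable aFun :=
  (ENNReal.measurable_ofReal.comp ((measurable_const.max measurable_id).inv)).indicator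
    measurableSet_Ici

lemma iFun_measurable : Measurable iFun :=
  measurable_const.indicator measurableSet_Icc

lemma iFun_lintegral : ∫⁻ x, iFun x = 1 := by
  rw [iFun, lintegral_indicator measurableSet_Icc]
  simp [Real.volume_Icc]

lemma aFun_Icc (x : ℝ) (hx : x ∈ Icc (0:ℝ) 1) : aFun x = 1 := by
  rw [aFun, indicator_of_mem (show x ∈ Ici (0:ℝ) from hx.1), max_eq_left hx.2]
  simp

lemma iFun_mul_aFun (x : ℝ) : iFun x * aFun x = (Icc (0:ℝ) 1).indicator aFun x := by
  by_cases h : x ∈ Icc (0:ℝ) 1 <;> simp [iFun, h]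

lemma iFun_mul_aFun_lintegral : ∫⁻ x, iFun x * aFun x = 1 := by
  simp_rw [iFun_mul_aFun]
  rw [lintegral_indicator measurableSet_Icc]
  rw [setLIntegral_congr_fun measurableSet_Icc (fun x hx => aFun_Icc x hx)]
  simp [Real.volume_Icc]

lemma inv_lintegral_top : ∫⁻ x in Ioi (1:ℝ), ENNReal.ofReal x⁻¹ = ⊤ := by
  by_contra h
  have hfm : AEStronglyMeasurable (fun x : ℝ => x⁻¹) (volume.restrict (Ioi (1:ℝ))) :=
    measurable_inv.aestronglyMeasurable
  have hf : 0 ≤ᵐ[volume.restrict (Ioi (1:ℝ))] fun x : ℝ => x⁻¹ := by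
    filter_upwards [ae_restrict_mem measurableSet_Ioi] with x hx
    exact inv_nonneg.mpr (le_of_lt (lt_trans one_pos hx))
  exact not_IntegrableOn_Ioi_inv ((lintegral_ofReal_ne_top_iff_integrable hfm hf).mp h)

lemma aFun_lintegral_top : ∫⁻ x, aFun x = ⊤ := by
  have hle : ∀ x, (Ioi (1:ℝ)).indicator (fun x => ENNReal.ofReal x⁻¹) x ≤ aFun x := by
    intro x
    by_cases h : x ∈ Ioi (1:ℝ)
    · rw [indicator_of_mem h, aFun,
        indicator_of_mem (mem_Ici.mpr (le_of_lt (lt_trans one_pos h))),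
        max_eq_right (le_of_lt h)]
    · rw [indicator_of_notMem h]; exact zero_le
  have h2 := lintegral_mono (μ := volume) hle
  rw [lintegral_indicator measurableSet_Ioi, inv_lintegral_top] at h2
  exact top_le_iff.mp h2

lemma rpow_lintegral_finite : ∫⁻ x in Ioi (1:ℝ), ENNReal.ofReal (x ^ (-(4:ℝ)/3)) ≠ ⊤ := by
  have hint : IntegrableOn (fun x : ℝ => x ^ (-(4:ℝ)/3)) (Ioi (1:ℝ)) :=
    integrableOn_Ioi_rpow_of_lt (by norm_num) one_pos
  have hf : 0 ≤ᵐ[volume.restrict (Ioi (1:ℝ))] fun x : ℝ => x ^ (-(4:ℝ)/3) := by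
    filter_upwards [ae_restrict_mem measurableSet_Ioi] with x hx
    exact Real.rpow_nonneg (le_of_lt (lt_trans one_pos hx)) _
  exact (lintegral_ofReal_ne_top_iff_integrable hint.aestronglyMeasurable hf).mpr hint

lemma aFun_rpow_finite : ∫⁻ x, aFun x ^ ((4:ℝ)/3) ≠ ⊤ := by
  have hle : ∀ x, aFun x ^ ((4:ℝ)/3) ≤
      (Icc (0:ℝ) 1).indicator 1 x + (Ioi (1:ℝ)).indicator
        (fun x => ENNReal.ofReal (x ^ (-(4:ℝ)/3))) x := by
    intro x
    rcases lt_or_ge x 0 with h | h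
    · rw [aFun, indicator_of_notMem (by simpa using h)]
      rw [ENNReal.zero_rpow_of_pos (by norm_num)]
      exact zero_le
    rcases le_or_gt x 1 with h1 | h1
    · rw [aFun_Icc x ⟨h, h1⟩, ENNReal.one_rpow,
        indicator_of_mem (mem_Icc.mpr ⟨h, h1⟩)]
      exact le_add_of_le_of_nonneg le_rfl zero_le
    · have hx0 : (0:ℝ) ≤ x := h
      rw [aFun, indicator_of_mem (mem_Ici.mpr h), max_eq_right (le_of_lt h1),
        indicator_of_notMem (fun hx => absurd hx.2 (not_le.mpr h1)),
        indicator_of_mem (mem_Ioi.mpr h1), zero_add,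
        ENNReal.ofReal_rpow_of_nonneg (inv_nonneg.mpr hx0) (by norm_num)]
      apply le_of_eq
      congr 1
      rw [Real.inv_rpow hx0, ← Real.rpow_neg hx0]
      norm_num
  have h2 := lintegral_mono (μ := volume) hle
  apply ne_top_of_le_ne_top _ h2
  rw [lintegral_add_left (f := (Icc (0:ℝ) 1).indicator 1) (measurable_const.indicator measurableSet_Icc)]
  rw [lintegral_indicator measurableSet_Icc, lintegral_indicator measurableSet_Ioi]
  simp only [Pi.one_apply, setLIntegral_one, Real.volume_Icc]
  exact ENNReal.add_ne_top.mpr ⟨by norm_num, rpow_lintegral_finite⟩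

lemma iFun_rpow (x : ℝ) : iFun x ^ ((4:ℝ)/3) = iFun x := by
  by_cases h : x ∈ Icc (0:ℝ) 1 <;>
    simp [iFun, h, ENNReal.zero_rpow_of_pos (show (0:ℝ) < 4/3 by norm_num)]

theorem no_finite_constant :
    ¬ ∃ C : ℝ≥0∞, C ≠ ⊤ ∧
      ∀ f : ℝ × ℝ → ℝ≥0∞, Measurable f →
        (∫⁻ x : ℝ × ℝ × ℝ, f (x.1, x.2.1) * f (x.2.1, x.2.2)) ≤
          C * ((∫⁻ y : ℝ × ℝ, f y ^ ((4 : ℝ) / 3)) ^ ((3 : ℝ) / 4)) ^ 2 := by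
  rintro ⟨C, hC, h⟩
  set f : ℝ × ℝ → ℝ≥0∞ := fun p => aFun p.1 * iFun p.2 with hf_def
  have hf : Measurable f :=
    (aFun_measurable.comp measurable_fst).mul (iFun_measurable.comp measurable_snd)
  have key := h f hf
  have hLHS : (∫⁻ x : ℝ × ℝ × ℝ, f (x.1, x.2.1) * f (x.2.1, x.2.2)) = ⊤ := by
    have hm : AEMeasurable (fun x : ℝ × ℝ × ℝ => f (x.1, x.2.1) * f (x.2.1, x.2.2))
        ((volume : Measure ℝ).prod ((volume : Measure ℝ).prod (volume : Measure ℝ))) := by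
      apply Measurable.aemeasurable
      exact (hf.comp (measurable_fst.prodMk (measurable_fst.comp measurable_snd))).mul
        (hf.comp ((measurable_fst.comp measurable_snd).prodMk
          (measurable_snd.comp measurable_snd)))
    rw [Measure.volume_eq_prod _ _, lintegral_prod _ (by
      rw [show (volume : Measure (ℝ × ℝ)) = (volume : Measure ℝ).prod volume from
        Measure.volume_eq_prod _ _]; exact hm)]
    have inner : ∀ x1 : ℝ, (∫⁻ y : ℝ × ℝ, f (x1, y.1) * f (y.1, y.2)) = aFun x1 := by
      intro x1
      have hm2 : AEMeasurable (fun y : ℝ × ℝ => f (x1, y.1) * f (y.1, y.2))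
          ((volume : Measure ℝ).prod (volume : Measure ℝ)) := by
        apply Measurable.aemeasurable
        exact (hf.comp (measurable_const.prodMk measurable_fst)).mul
          (hf.comp (measurable_fst.prodMk measurable_snd))
      rw [Measure.volume_eq_prod _ _, lintegral_prod _ hm2]
      have inner2 : ∀ x2 : ℝ, (∫⁻ x3 : ℝ, f (x1, x2) * f (x2, x3))
          = aFun x1 * (iFun x2 * aFun x2) := by
        intro x2
        simp only [hf_def]
        have hre : ∀ x3 : ℝ, aFun x1 * iFun x2 * (aFun x2 * iFun x3)
            = (aFun x1 * (iFun x2 * aFun x2)) * iFun x3 := by intro x3; ring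
        simp_rw [hre]
        rw [lintegral_const_mul'' _ iFun_measurable.aemeasurable, iFun_lintegral, mul_one]
      simp_rw [inner2]
      rw [lintegral_const_mul'' _ (show AEMeasurable (fun x => iFun x * aFun x) volume from
          (iFun_measurable.mul aFun_measurable).aemeasurable),
        iFun_mul_aFun_lintegral, mul_one]
    simp_rw [inner]
    exact aFun_lintegral_top
  have hRHS : (∫⁻ y : ℝ × ℝ, f y ^ ((4 : ℝ) / 3)) = ∫⁻ x, aFun x ^ ((4:ℝ)/3) := by
    have hm : AEMeasurable (fun y : ℝ × ℝ => f y ^ ((4:ℝ)/3))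
        ((volume : Measure ℝ).prod (volume : Measure ℝ)) :=
      (hf.pow_const _).aemeasurable
    rw [Measure.volume_eq_prod _ _, lintegral_prod _ hm]
    have inner : ∀ x1 : ℝ, (∫⁻ x2 : ℝ, f (x1, x2) ^ ((4:ℝ)/3)) = aFun x1 ^ ((4:ℝ)/3) := by
      intro x1
      have hre : ∀ x2 : ℝ, f (x1, x2) ^ ((4:ℝ)/3) = aFun x1 ^ ((4:ℝ)/3) * iFun x2 := by
        intro x2
        simp only [hf_def]
        rw [ENNReal.mul_rpow_of_nonneg _ _ (by norm_num), iFun_rpow]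
      simp_rw [hre]
      rw [lintegral_const_mul'' _ iFun_measurable.aemeasurable, iFun_lintegral, mul_one]
    simp_rw [inner]
  rw [hLHS, hRHS] at key
  have hfin : C * ((∫⁻ x, aFun x ^ ((4:ℝ)/3)) ^ ((3:ℝ)/4)) ^ 2 ≠ ⊤ := by
    apply ENNReal.mul_ne_top hC
    exact ENNReal.pow_ne_top (ENNReal.rpow_ne_top_of_nonneg (by norm_num) aFun_rpow_finite)
  exact hfin (top_le_iff.mp key)
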